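/- Let D > 1 be squarefree, δ and ξ as determined by the congruence class of D mod 4, with Δ the discriminant (Δ = 4D if D ≡ 2,3 mod 4; Δ = D if D ≡ 1 mod 4), δ_i = p_i + q_i δ the convergent elements, N_i = |N(δ_i)| = (-1)^{i+1} N(δ_i), and c_{i+1} = [u_{i+1}, u_{i+2}, ...] the complete quotients of ξ. Then for each i ≥ 0, N_i = √Δ / c_{i+1} - N_{i-1} / c_{i+1}². -/

import Mathlib

/-- For D > 1 squarefree, with δ, ξ, Δ determined by D mod 4 (δ = ξ = √D and
Δ = 4D if D ≡ 2,3 mod 4; δ = (1+√D)/2, ξ = (√D-1)/2, Δ = D if D ≡ 1 mod 4),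
δ' the conjugate of δ, c_j = [u_j, u_{j+1}, ...] the complete quotients of ξ
(c_0 = ξ), and convergents shifted so that `P (i+1)` is `p_i`,
N_i = (-1)^{i+1} (p_i + q_i δ)(p_i + q_i δ') satisfies
N_i = √Δ / c_{i+1} - N_{i-1} / c_{i+1}² for all i ≥ 0. -/
theorem Ni_recurrence (D : ℤ) (hD : 1 < D) (hsf : Squarefree D)
    (δ δ' ξ Δ : ℝ)
    (hcase :
      (D % 4 = 1 ∧ δ = (1 + Real.sqrt D) / 2 ∧ δ' = (1 - Real.sqrt D) / 2 ∧
        ξ = (Real.sqrt D - 1) / 2 ∧ Δ = D) ∨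
      ((D % 4 = 2 ∨ D % 4 = 3) ∧ δ = Real.sqrt D ∧ δ' = -Real.sqrt D ∧
        ξ = Real.sqrt D ∧ Δ = 4 * D))
    (u : ℕ → ℕ) (hu : ∀ j, 0 < u j)
    (c : ℕ → ℝ)
    (hc0 : c 0 = ξ)
    (hc : ∀ j, c j = u j + 1 / c (j + 1))
    (hfloor : ∀ j, (u j : ℤ) = ⌊c j⌋)
    (P Q : ℕ → ℤ)
    (hP0 : P 0 = 1) (hQ0 : Q 0 = 0)
    (hP1 : P 1 = u 0) (hQ1 : Q 1 = 1)
    (hPrec : ∀ i, P (i + 2) = u (i + 1) * P (i + 1) + P i)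
    (hQrec : ∀ i, Q (i + 2) = u (i + 1) * Q (i + 1) + Q i) :
    ∀ i : ℕ,
      (-1 : ℝ) ^ (i + 1) * ((P (i + 1) + Q (i + 1) * δ) * (P (i + 1) + Q (i + 1) * δ'))
        = Real.sqrt Δ / c (i + 1)
          - ((-1 : ℝ) ^ i * ((P i + Q i * δ) * (P i + Q i * δ'))) / (c (i + 1)) ^ 2 := by
  -- every complete quotient is ≥ 1, hence nonzero
  have hc1 : ∀ j, (1:ℝ) ≤ c j := by
    intro j
    have h1 : (1:ℤ) ≤ ⌊c j⌋ := by rw [← hfloor j]; exact_mod_cast hu j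
    calc (1:ℝ) ≤ (⌊c j⌋ : ℝ) := by exact_mod_cast h1
      _ ≤ c j := Int.floor_le _
  have hcne : ∀ j, c j ≠ 0 := fun j => by have := hc1 j; linarith
  have hDpos : (0:ℝ) < (D:ℝ) := by exact_mod_cast (by linarith : (0:ℤ) < D)
  -- δ' = -ξ and δ = -ξ + √Δ in both cases
  have hδ' : δ' = -ξ := by
    rcases hcase with ⟨_, _, h1, h2, _⟩ | ⟨_, _, h1, h2, _⟩ <;> rw [h1, h2] <;> ring
  have hδ : δ = -ξ + Real.sqrt Δ := by
    rcases hcase with ⟨_, h0, _, h2, h3⟩ | ⟨_, h0, _, h2, h3⟩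
    · rw [h0, h2, h3]; ring
    · rw [h0, h2, h3]
      rw [show (4:ℝ) * (D:ℤ) = 2^2 * D by push_cast; ring,
        Real.sqrt_mul (by norm_num), Real.sqrt_sq (by norm_num : (0:ℝ) ≤ 2)]
      ring
  -- key recurrence for B_i = P i - Q i ξ
  have hB : ∀ i : ℕ, c (i+1) * ((P (i+1) : ℝ) - Q (i+1) * ξ) = -((P i : ℝ) - Q i * ξ) := by
    intro i
    induction i with
    | zero =>
      rw [hP1, hQ1, hP0, hQ0]
      have h := hc 0
      rw [hc0] at h
      have hne := hcne 1
      field_simp at h ⊢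
      linear_combination -h
    | succ n ih =>
      have h := hc (n+1)
      have hne := hcne (n+2)
      rw [hPrec n, hQrec n]
      push_cast
      field_simp at h
      linear_combination c (n+2) * ih - ((P (n+1):ℝ) - Q (n+1) * ξ) * h
  -- determinant identity
  have hdet : ∀ i : ℕ, (Q (i+1) * P i - P (i+1) * Q i : ℤ) = (-1)^i := by
    intro i
    induction i with
    | zero => simp [hP0, hQ0, hP1, hQ1]
    | succ n ih =>
      rw [hPrec n, hQrec n, pow_succ]
      linear_combination -ih
  intro i
  have h1 := hB i
  have h2 : ((Q (i+1) : ℝ) * P i - (P (i+1) : ℝ) * Q i) = (-1)^i := by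
    exact_mod_cast hdet i
  have hx := hcne (i+1)
  have ha : ((-1:ℝ)^i) * ((-1:ℝ)^i) = 1 := by
    rw [← pow_add, ← two_mul, pow_mul]; norm_num
  rw [hδ, hδ']
  field_simp
  linear_combination
      (((-1:ℝ)^i) * (((P i:ℝ) - Q i * ξ) - c (i+1) * ((P (i+1):ℝ) - Q (i+1) * ξ))
          + ((-1:ℝ)^i) * (Q i:ℝ) * Real.sqrt Δ
          - ((-1:ℝ)^i) * c (i+1) * Real.sqrt Δ * (Q (i+1):ℝ)) * h1
      + (((-1:ℝ)^i) * c (i+1) * Real.sqrt Δ) * h2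
      + (c (i+1) * Real.sqrt Δ) * ha
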